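/- In the lattice of Section 5, 2K_X + L₁ + L₂ + L₃ = 11T̃ - 7E₀ - Σ₁⁴(2E_i + 4E_i') - E₅, with self-intersection 121 - 49 - 4(4+16) - 1 = -9; hence K_V² = -9, and after contracting 16 disjoint (-1)-curves the minimal model V' satisfies K_{V'}² = -9 + 16 = 7. -/
import Mathlib


def ip13 (v w : Fin 11 → ℤ) : ℤ := v 0 * w 0 - ∑ i : Fin 10, v i.succ * w i.succ

def K13X : Fin 11 → ℤ := ![-3, 1, 1, 1, 1, 1, 1, 1, 1, 1, 1]
def L13₁ : Fin 11 → ℤ := ![8, -4, -2, -2, -2, -3, -2, -3, -2, -3, -2]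
def L13₂ : Fin 11 → ℤ := ![5, -3, -1, -2, -1, -2, -1, -2, -1, -1, -1]
def L13₃ : Fin 11 → ℤ := ![4, -2, -1, -2, -1, -1, -1, -1, -1, -2, 0]

/-- Section 5: 2K_X+L₁+L₂+L₃ ≡ 11T̃-7E₀-Σ₁⁴(2E_i+4E_i')-E₅ with self-intersection
121-49-4(4+16)-1 = -9; hence K_V² = -9 and K_{V'}² = -9+16 = 7. -/
theorem stmt13 :
    (2 : ℤ) • K13X + L13₁ + L13₂ + L13₃ = ![11, -7, -2, -4, -2, -4, -2, -4, -2, -4, -1] ∧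
    ip13 ((2 : ℤ) • K13X + L13₁ + L13₂ + L13₃) ((2 : ℤ) • K13X + L13₁ + L13₂ + L13₃) =
      121 - 49 - 4 * (4 + 16) - 1 ∧
    ip13 ((2 : ℤ) • K13X + L13₁ + L13₂ + L13₃) ((2 : ℤ) • K13X + L13₁ + L13₂ + L13₃) = -9 ∧
    ip13 ((2 : ℤ) • K13X + L13₁ + L13₂ + L13₃) ((2 : ℤ) • K13X + L13₁ + L13₂ + L13₃) + 16 = 7 := by
  have h : (2 : ℤ) • K13X + L13₁ + L13₂ + L13₃ = ![11, -7, -2, -4, -2, -4, -2, -4, -2, -4, -1] := by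
    funext i
    fin_cases i <;> norm_num [K13X, L13₁, L13₂, L13₃, Matrix.cons_val_succ]
  refine ⟨h, ?_, ?_, ?_⟩ <;> rw [h] <;> simp [ip13, Fin.sum_univ_succ]
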